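/- Let (A, V) be a normal box with section ω and f : M → N an isomorphism of representations. Then for every object a, the linear map f(ω_a) : M(a) → N(a) (evaluation of f at the section element) is an isomorphism of vector spaces. -/
import Mathlib


open MulOpposite TensorProduct

section Box

variable (k A V : Type*) [Field k] [Ring A] [Algebra k A]
  [AddCommGroup V] [Module k V] [Module A V] [Module Aᵐᵒᵖ V]
  [IsScalarTower k A V] [IsScalarTower k Aᵐᵒᵖ V] [SMulCommClass A Aᵐᵒᵖ V]

/-- The submodule of balancing relations defining `V ⊗_A V` as a quotient of
`V ⊗_k V`. -/
def boxRel : Submodule k (V ⊗[k] V) :=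
  Submodule.span k
    {z : V ⊗[k] V | ∃ (a : A) (v w : V), z = (op a • v) ⊗ₜ[k] w - v ⊗ₜ[k] (a • w)}

/-- The tensor product `V ⊗_A V` of the `A`-bimodule `V` with itself over `A`. -/
abbrev BoxTensor := (V ⊗[k] V) ⧸ boxRel k A V

/-- The class of a pure tensor `x ⊗ y` in `V ⊗_A V`. -/
noncomputable def boxMk (x y : V) : BoxTensor k A V := Submodule.Quotient.mk (x ⊗ₜ[k] y)

variable {X : Type*} [AddCommGroup X] [Module k X]

/-- The universal property of `V ⊗_A V`: an `A`-balanced `k`-bilinear map on `V × V`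
induces a linear map on `V ⊗_A V`. -/
noncomputable def boxLift (B : V →ₗ[k] V →ₗ[k] X)
    (hB : ∀ (a : A) (v w : V), B (op a • v) w = B v (a • w)) :
    BoxTensor k A V →ₗ[k] X :=
  Submodule.liftQ _ (TensorProduct.lift B) (by
    unfold boxRel
    rw [Submodule.span_le]
    rintro z ⟨a, v, w, rfl⟩
    simp [SetLike.mem_coe, LinearMap.mem_ker, map_sub, TensorProduct.lift.tmul, hB])

variable {M N L : Type*}
  [AddCommGroup M] [Module k M] [AddCommGroup N] [Module k N]
  [AddCommGroup L] [Module k L]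

/-- The bilinear map `(x, y) ↦ g(x) ∘ f(y)` underlying the composition of morphisms of
representations of a box. -/
noncomputable def compBil (g : V →ₗ[k] (N →ₗ[k] L)) (f : V →ₗ[k] (M →ₗ[k] N)) :
    V →ₗ[k] V →ₗ[k] (M →ₗ[k] L) :=
  LinearMap.mk₂ k (fun x y => (g x) ∘ₗ (f y))
    (by intros; simp [LinearMap.add_comp])
    (by intros; simp [LinearMap.smul_comp])
    (by intros; simp [LinearMap.comp_add])
    (by intros; simp [LinearMap.comp_smul])

/-- Composition of morphisms of representations of a box, defined via the
comultiplication `μ`: `(g f)(v) = Σ g(v₍₁₎) ∘ f(v₍₂₎)`. -/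
noncomputable def boxComp [Module A N] (μ : V →ₗ[k] BoxTensor k A V)
    (g : V →ₗ[k] (N →ₗ[k] L)) (f : V →ₗ[k] (M →ₗ[k] N))
    (hg : ∀ (a : A) (v : V) (n : N), g (op a • v) n = g v (a • n))
    (hf : ∀ (a : A) (v : V) (m : M), f (a • v) m = a • f v m) :
    V →ₗ[k] (M →ₗ[k] L) :=
  (boxLift k A V (compBil k V g f) (by
    intro a v w
    ext m
    simp [compBil, hg, hf])) ∘ₗ μ

/-- The identity morphism of a representation `M`, defined via the counit `ι`:
`id_M(v) = (m ↦ ι(v) • m)`. -/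
noncomputable def boxId (ι : V →ₗ[k] A)
    [Module A M] [IsScalarTower k A M] [SMulCommClass A k M] :
    V →ₗ[k] (M →ₗ[k] M) where
  toFun v :=
    { toFun := fun m => ι v • m
      map_add' := fun m m' => smul_add (ι v) m m'
      map_smul' := fun c m => by
        simp only [RingHom.id_apply]
        exact (smul_comm c (ι v) m).symm }
  map_add' := by intro v v'; ext m; simp [add_smul]
  map_smul' := by intro c v; ext m; simp [smul_assoc]

end Box


lemma boxComp_section_apply {k A V : Type*} [Field k] [Ring A] [Algebra k A]
    [AddCommGroup V] [Module k V] [Module A V] [Module Aᵐᵒᵖ V]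
    [IsScalarTower k A V] [IsScalarTower k Aᵐᵒᵖ V] [SMulCommClass A Aᵐᵒᵖ V]
    {M N L : Type*} [AddCommGroup M] [Module k M] [AddCommGroup N] [Module k N]
    [AddCommGroup L] [Module k L] [Module A N]
    (μ : V →ₗ[k] BoxTensor k A V) (ω : V) (hωμ : μ ω = boxMk k A V ω ω)
    (g : V →ₗ[k] (N →ₗ[k] L)) (f : V →ₗ[k] (M →ₗ[k] N))
    (hg : ∀ (a : A) (v : V) (n : N), g (op a • v) n = g v (a • n))
    (hf : ∀ (a : A) (v : V) (m : M), f (a • v) m = a • f v m) :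
    boxComp k A V μ g f hg hf ω = (g ω) ∘ₗ (f ω) := by
  unfold boxComp
  simp only [LinearMap.comp_apply, hωμ]
  unfold boxMk boxLift
  rw [Submodule.liftQ_apply, TensorProduct.lift.tmul]
  rfl

/-- If `f : M → N` is an isomorphism of representations of a normal box with section
`ω`, then the evaluation `f(ω) : M → N` is an isomorphism of vector spaces. -/
theorem box_iso_eval_section_bijective
    {k A V : Type*} [Field k] [Ring A] [Algebra k A]
    [AddCommGroup V] [Module k V] [Module A V] [Module Aᵐᵒᵖ V]
    [IsScalarTower k A V] [IsScalarTower k Aᵐᵒᵖ V] [SMulCommClass A Aᵐᵒᵖ V]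
    {M N : Type*} [AddCommGroup M] [Module k M] [AddCommGroup N] [Module k N]
    [Module A M] [IsScalarTower k A M] [SMulCommClass A k M]
    [Module A N] [IsScalarTower k A N] [SMulCommClass A k N]
    (μ : V →ₗ[k] BoxTensor k A V) (ι : V →ₗ[k] A)
    (ω : V) (hω : ι ω = 1) (hωμ : μ ω = boxMk k A V ω ω)
    (f : V →ₗ[k] (M →ₗ[k] N)) (g : V →ₗ[k] (N →ₗ[k] M))
    (hfr : ∀ (a : A) (v : V) (m : M), f (op a • v) m = f v (a • m))
    (hgr : ∀ (a : A) (v : V) (n : N), g (op a • v) n = g v (a • n))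
    (hfl : ∀ (a : A) (v : V) (m : M), f (a • v) m = a • f v m)
    (hgl : ∀ (a : A) (v : V) (n : N), g (a • v) n = a • g v n)
    (hgf : boxComp k A V μ g f hgr hfl = boxId k A V ι)
    (hfg : boxComp k A V μ f g hfr hgl = boxId k A V ι) :
    Function.Bijective (f ω) := by
  have h1 : (g ω) ∘ₗ (f ω) = LinearMap.id := by
    rw [← boxComp_section_apply μ ω hωμ g f hgr hfl, hgf]
    ext m; simp [boxId, hω]
  have h2 : (f ω) ∘ₗ (g ω) = LinearMap.id := by
    rw [← boxComp_section_apply μ ω hωμ f g hfr hgl, hfg]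
    ext n; simp [boxId, hω]
  exact Function.bijective_iff_has_inverse.mpr ⟨g ω,
    fun m => congrArg (· m) h1, fun n => congrArg (· n) h2⟩
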